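/- Let (a,b) be a perplex parameter and suppose Δ > 0, where Δ := (a₁b₃ − a₃b₁)² − 4(a₁b₂ − a₂b₁)(a₂b₃ − a₃b₂). Then ℙ_{a,b} is isomorphic to the split algebra ℝ ⊕ ℝ: there exists a real-linear equivalence φ : ℝ² → ℝ × ℝ such that φ(x * y) = φ(x)·φ(y) (componentwise multiplication) for all x, y ∈ ℝ². -/

import Mathlib

open Filter Topology

noncomputable section

/-- The perplex product on `ℝ²` determined by the parameters `a = (a₁,a₂,a₃)`,
`b = (b₁,b₂,b₃)`. -/
def pmul (a₁ a₂ a₃ b₁ b₂ b₃ : ℝ) (x y : ℝ × ℝ) : ℝ × ℝ :=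
  (a₁ * x.1 * y.1 + a₂ * (x.1 * y.2 + x.2 * y.1) + a₃ * x.2 * y.2,
   b₁ * x.1 * y.1 + b₂ * (x.1 * y.2 + x.2 * y.1) + b₃ * x.2 * y.2)

/-- `(a,b)` is a perplex parameter: conditions (i)-(iv). -/
def IsPerplexParam (a₁ a₂ a₃ b₁ b₂ b₃ : ℝ) : Prop :=
  a₁ * a₃ - a₂ ^ 2 ≠ 0 ∧ a₁ * b₂ - a₂ * b₁ ≠ 0 ∧
    a₂ * b₂ - a₃ * b₁ = 0 ∧ a₁ * a₃ - a₂ ^ 2 + a₂ * b₃ - a₃ * b₂ = 0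

/-- An explicit linear equivalence of `ℝ²` given by an invertible `2×2` matrix of
coefficients. -/
noncomputable def coeffEquiv (p1 q1 p2 q2 : ℝ) (hd : p1 * q2 - p2 * q1 ≠ 0) :
    (ℝ × ℝ) ≃ₗ[ℝ] ℝ × ℝ where
  toFun x := (p1 * x.1 + q1 * x.2, p2 * x.1 + q2 * x.2)
  map_add' x y := by
    simp only [Prod.fst_add, Prod.snd_add, Prod.mk_add_mk, Prod.mk.injEq]
    constructor <;> ring
  map_smul' c x := by
    simp only [Prod.smul_fst, Prod.smul_snd, smul_eq_mul, Prod.smul_mk, RingHom.id_apply,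
      Prod.mk.injEq]
    constructor <;> ring
  invFun y := ((q2 * y.1 - q1 * y.2) / (p1 * q2 - p2 * q1),
               (p1 * y.2 - p2 * y.1) / (p1 * q2 - p2 * q1))
  left_inv x := by
    dsimp only
    have h1 : (q2 * (p1 * x.1 + q1 * x.2) - q1 * (p2 * x.1 + q2 * x.2)) / (p1 * q2 - p2 * q1)
        = x.1 := by rw [div_eq_iff hd]; ring
    have h2 : (p1 * (p2 * x.1 + q2 * x.2) - p2 * (p1 * x.1 + q1 * x.2)) / (p1 * q2 - p2 * q1)
        = x.2 := by field_simp; ring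
    rw [h1, h2]
  right_inv y := by
    dsimp only
    have h1 : p1 * ((q2 * y.1 - q1 * y.2) / (p1 * q2 - p2 * q1)) +
        q1 * ((p1 * y.2 - p2 * y.1) / (p1 * q2 - p2 * q1)) = y.1 := by
      rw [← mul_div_assoc, ← mul_div_assoc, ← add_div, div_eq_iff hd]; ring
    have h2 : p2 * ((q2 * y.1 - q1 * y.2) / (p1 * q2 - p2 * q1)) +
        q2 * ((p1 * y.2 - p2 * y.1) / (p1 * q2 - p2 * q1)) = y.2 := by
      rw [← mul_div_assoc, ← mul_div_assoc, ← add_div, div_eq_iff hd]; ring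
    rw [h1, h2]

@[simp] lemma coeffEquiv_apply (p1 q1 p2 q2 : ℝ) (hd : p1 * q2 - p2 * q1 ≠ 0) (x : ℝ × ℝ) :
    coeffEquiv p1 q1 p2 q2 hd x = (p1 * x.1 + q1 * x.2, p2 * x.1 + q2 * x.2) := rfl

lemma char_eqs (a₁ a₂ a₃ b₁ b₂ b₃ r s p q : ℝ)
    (h1 : a₁ * a₃ - a₂ ^ 2 ≠ 0)
    (hk : a₁ * b₂ - a₂ * b₁ ≠ 0)
    (h3 : a₂ * b₂ - a₃ * b₁ = 0)
    (h4 : a₁ * a₃ - a₂ ^ 2 + a₂ * b₃ - a₃ * b₂ = 0)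
    (hI : b₂ ^ 2 - b₁ * b₃ = a₁ * b₂ - a₂ * b₁)
    (hr : r ^ 2 = (a₁ * b₃ - a₃ * b₁) ^ 2 -
        4 * (a₁ * b₂ - a₂ * b₁) * (a₂ * b₃ - a₃ * b₂))
    (hs : s ^ 2 = 1)
    (hp : p = ((a₁ * b₂ - a₂ * b₁) * (a₁ + b₂) + s * (b₁ * r)) / (2 * (a₁ * b₂ - a₂ * b₁)))
    (hq : q = ((a₁ * b₂ - a₂ * b₁) * (a₂ + b₃) + s * (b₂ * r)) / (2 * (a₁ * b₂ - a₂ * b₁))) :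
    a₁ * p + b₁ * q = p ^ 2 ∧ a₂ * p + b₂ * q = p * q ∧ a₃ * p + b₃ * q = q ^ 2 := by
  have hK2 : 2 * (a₁ * b₂ - a₂ * b₁) ≠ 0 := mul_ne_zero two_ne_zero hk
  have hp' : 2 * (a₁ * b₂ - a₂ * b₁) * p
      = (a₁ * b₂ - a₂ * b₁) * (a₁ + b₂) + s * (b₁ * r) := by
    rw [hp]; field_simp
  have hq' : 2 * (a₁ * b₂ - a₂ * b₁) * q
      = (a₁ * b₂ - a₂ * b₁) * (a₂ + b₃) + s * (b₂ * r) := by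
    rw [hq]; field_simp
  have hK2sq : (2 * (a₁ * b₂ - a₂ * b₁)) ^ 2 ≠ 0 := pow_ne_zero 2 hK2
  -- equation 1
  have e1 : a₁ * p + b₁ * q = p ^ 2 := by
    have H : (2 * (a₁ * b₂ - a₂ * b₁)) ^ 2 * (a₁ * p + b₁ * q - p ^ 2) = 0 := by
      calc (2 * (a₁ * b₂ - a₂ * b₁)) ^ 2 * (a₁ * p + b₁ * q - p ^ 2)
          = 2 * (a₁ * b₂ - a₂ * b₁) *
              (a₁ * (2 * (a₁ * b₂ - a₂ * b₁) * p) + b₁ * (2 * (a₁ * b₂ - a₂ * b₁) * q))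
            - (2 * (a₁ * b₂ - a₂ * b₁) * p) ^ 2 := by ring
        _ = 0 := by
          rw [hp', hq']
          linear_combination (-(b₁ ^ 2 * r ^ 2)) * hs - b₁ ^ 2 * hr
            + (-(-a₃ * b₁ ^ 3 - a₂ * b₁ ^ 2 * b₂ + 2 * a₁ * b₁ * b₂ ^ 2 + 2 * a₁ * b₁ ^ 2 * b₃
                + 4 * a₁ * a₂ * b₁ ^ 2 - 7 * a₁ ^ 2 * b₁ * b₂ + a₁ ^ 3 * b₁)) * h3
            + (-(4 * a₂ * b₁ ^ 3 - 6 * a₁ * b₁ ^ 2 * b₂ + a₁ ^ 2 * b₁ ^ 2)) * h4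
            + (-((-a₁ ^ 2 * b₂ ^ 2 - a₁ ^ 2 * b₁ * b₃ + a₁ ^ 3 * b₂)
                + 2 * (a₁ * b₂ - a₂ * b₁) ^ 2)) * hI
    have := (mul_eq_zero.mp H).resolve_left hK2sq
    linarith
  -- equation 3
  have e3 : a₃ * p + b₃ * q = q ^ 2 := by
    have H : (2 * (a₁ * b₂ - a₂ * b₁)) ^ 2 * (a₃ * p + b₃ * q - q ^ 2) = 0 := by
      calc (2 * (a₁ * b₂ - a₂ * b₁)) ^ 2 * (a₃ * p + b₃ * q - q ^ 2)
          = 2 * (a₁ * b₂ - a₂ * b₁) *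
              (a₃ * (2 * (a₁ * b₂ - a₂ * b₁) * p) + b₃ * (2 * (a₁ * b₂ - a₂ * b₁) * q))
            - (2 * (a₁ * b₂ - a₂ * b₁) * q) ^ 2 := by ring
        _ = 0 := by
          rw [hp', hq']
          linear_combination (-(b₂ ^ 2 * r ^ 2)) * hs - b₂ ^ 2 * hr
            + (-(-4 * a₃ * b₁ * b₂ ^ 2 + 4 * a₂ * b₁ * b₂ * b₃ + 4 * a₁ * a₃ * b₁ * b₂
                - 4 * a₁ * a₂ * b₂ ^ 2 - 2 * a₁ * a₂ * b₁ * b₃ + 2 * a₁ * a₂ ^ 2 * b₁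
                + 2 * a₁ ^ 2 * b₂ * b₃ - a₁ ^ 2 * a₃ * b₁ - a₁ ^ 2 * a₂ * b₂)
              - 2 * (a₁ * b₂ - a₂ * b₁) * s * r) * h3
            + (-(3 * a₃ * b₁ ^ 2 * b₂ - a₂ * b₁ ^ 2 * b₃ + a₂ ^ 2 * b₁ ^ 2 - 4 * a₁ * b₂ ^ 3
                + 2 * a₁ * b₁ * b₂ * b₃ - a₁ * a₃ * b₁ ^ 2)
              + 2 * (a₁ * b₂ - a₂ * b₁) ^ 2) * h4
    have := (mul_eq_zero.mp H).resolve_left hK2sq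
    linarith
  -- equation 2
  have e2 : a₂ * p + b₂ * q = p * q := by
    rcases eq_or_ne b₁ 0 with hb1 | hb1
    · -- degenerate case: b₁ = 0, hence a₂ = 0 and b₂ = a₁
      have hb2 : b₂ ≠ 0 := by
        intro h0; exact hk (by rw [hb1, h0]; ring)
      have ha2 : a₂ = 0 := by
        have h30 : a₂ * b₂ = 0 := by linear_combination h3 + a₃ * hb1
        exact (mul_eq_zero.mp h30).resolve_right hb2
      have ha3 : a₃ ≠ 0 := by
        intro h0; exact h1 (by rw [h0, ha2]; ring)
      have hb2a1 : b₂ = a₁ := by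
        have h40 : a₃ * (b₂ - a₁) = 0 := by
          linear_combination -h4 + (b₃ - a₂) * ha2
        have := (mul_eq_zero.mp h40).resolve_left ha3
        linarith
      have hpa : p = a₁ := by
        apply mul_left_cancel₀ hK2
        rw [hp']; rw [hb1, hb2a1]; ring
      rw [ha2, hb2a1, hpa]; ring
    · have H : b₁ * (2 * (a₁ * b₂ - a₂ * b₁)) ^ 2 * (a₂ * p + b₂ * q - p * q) = 0 := by
        calc b₁ * (2 * (a₁ * b₂ - a₂ * b₁)) ^ 2 * (a₂ * p + b₂ * q - p * q)
            = b₁ * (2 * (a₁ * b₂ - a₂ * b₁) *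
                (a₂ * (2 * (a₁ * b₂ - a₂ * b₁) * p) + b₂ * (2 * (a₁ * b₂ - a₂ * b₁) * q))
              - (2 * (a₁ * b₂ - a₂ * b₁) * p) * (2 * (a₁ * b₂ - a₂ * b₁) * q)) := by ring
          _ = 0 := by
            rw [hp', hq']
            linear_combination (-(b₂ * b₁ ^ 2 * r ^ 2)) * hs - b₂ * b₁ ^ 2 * hr
              + (-(b₂ * (-a₃ * b₁ ^ 3 - a₂ * b₁ ^ 2 * b₂ + 2 * a₁ * b₁ * b₂ ^ 2
                  + 2 * a₁ * b₁ ^ 2 * b₃ + 4 * a₁ * a₂ * b₁ ^ 2 - 7 * a₁ ^ 2 * b₁ * b₂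
                  + a₁ ^ 3 * b₁))) * h3
              + (-(b₂ * (4 * a₂ * b₁ ^ 3 - 6 * a₁ * b₁ ^ 2 * b₂ + a₁ ^ 2 * b₁ ^ 2))) * h4
              + ((((a₁ * b₂ - a₂ * b₁) * (a₁ + b₂) + s * (b₁ * r))
                  - 2 * (a₁ * b₂ - a₂ * b₁) * b₂) * (a₁ * b₂ - a₂ * b₁)
                - b₂ * (-a₁ ^ 2 * b₂ ^ 2 - a₁ ^ 2 * b₁ * b₃ + a₁ ^ 3 * b₂)) * hI
      have hbK : b₁ * (2 * (a₁ * b₂ - a₂ * b₁)) ^ 2 ≠ 0 := mul_ne_zero hb1 hK2sq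
      have := (mul_eq_zero.mp H).resolve_left hbK
      linarith
  exact ⟨e1, e2, e3⟩

/-- Classification, case `Δ > 0`: `ℙ_{a,b}` is isomorphic to the split algebra
`ℝ ⊕ ℝ` with componentwise multiplication. -/
theorem perplex_iso_split_of_discriminant_pos (a₁ a₂ a₃ b₁ b₂ b₃ : ℝ)
    (hp : IsPerplexParam a₁ a₂ a₃ b₁ b₂ b₃)
    (hΔ : 0 < (a₁ * b₃ - a₃ * b₁) ^ 2 -
        4 * (a₁ * b₂ - a₂ * b₁) * (a₂ * b₃ - a₃ * b₂)) :
    ∃ φ : (ℝ × ℝ) ≃ₗ[ℝ] ℝ × ℝ, ∀ x y : ℝ × ℝ, φ (pmul a₁ a₂ a₃ b₁ b₂ b₃ x y) = φ x * φ y := by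
  obtain ⟨h1, hk, h3, h4⟩ := hp
  -- the key identity (I): b₂² - b₁b₃ = a₁b₂ - a₂b₁
  have hI : b₂ ^ 2 - b₁ * b₃ = a₁ * b₂ - a₂ * b₁ := by
    rcases eq_or_ne a₂ 0 with ha2 | ha2
    · have ha3 : a₃ ≠ 0 := by
        intro h0; exact h1 (by rw [ha2, h0]; ring)
      have hb1 : b₁ = 0 := by
        have h30 : a₃ * b₁ = 0 := by linear_combination -h3 + b₂ * ha2
        exact (mul_eq_zero.mp h30).resolve_left ha3
      have hb2 : b₂ = a₁ := by
        have h40 : a₃ * (b₂ - a₁) = 0 := by linear_combination -h4 + (b₃ - a₂) * ha2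
        have := (mul_eq_zero.mp h40).resolve_left ha3
        linarith
      rw [hb1, hb2, ha2]; ring
    · apply mul_left_cancel₀ ha2
      linear_combination (b₂ - a₁) * h3 - b₁ * h4
  set Δ : ℝ := (a₁ * b₃ - a₃ * b₁) ^ 2 -
      4 * (a₁ * b₂ - a₂ * b₁) * (a₂ * b₃ - a₃ * b₂) with hΔdef
  set r : ℝ := Real.sqrt Δ with hrdef
  have hr : r ^ 2 = (a₁ * b₃ - a₃ * b₁) ^ 2 -
      4 * (a₁ * b₂ - a₂ * b₁) * (a₂ * b₃ - a₃ * b₂) := Real.sq_sqrt hΔ.le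
  have hrpos : 0 < r := Real.sqrt_pos.mpr hΔ
  set P₁ : ℝ := ((a₁ * b₂ - a₂ * b₁) * (a₁ + b₂) + 1 * (b₁ * r)) /
      (2 * (a₁ * b₂ - a₂ * b₁)) with hP₁
  set Q₁ : ℝ := ((a₁ * b₂ - a₂ * b₁) * (a₂ + b₃) + 1 * (b₂ * r)) /
      (2 * (a₁ * b₂ - a₂ * b₁)) with hQ₁
  set P₂ : ℝ := ((a₁ * b₂ - a₂ * b₁) * (a₁ + b₂) + (-1) * (b₁ * r)) /
      (2 * (a₁ * b₂ - a₂ * b₁)) with hP₂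
  set Q₂ : ℝ := ((a₁ * b₂ - a₂ * b₁) * (a₂ + b₃) + (-1) * (b₂ * r)) /
      (2 * (a₁ * b₂ - a₂ * b₁)) with hQ₂
  obtain ⟨e11, e21, e31⟩ := char_eqs a₁ a₂ a₃ b₁ b₂ b₃ r 1 P₁ Q₁ h1 hk h3 h4 hI hr
    (by norm_num) hP₁ hQ₁
  obtain ⟨e12, e22, e32⟩ := char_eqs a₁ a₂ a₃ b₁ b₂ b₃ r (-1) P₂ Q₂ h1 hk h3 h4 hI hr
    (by norm_num) hP₂ hQ₂
  -- determinant
  have hK2 : 2 * (a₁ * b₂ - a₂ * b₁) ≠ 0 := mul_ne_zero two_ne_zero hk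
  have hP₁' : 2 * (a₁ * b₂ - a₂ * b₁) * P₁
      = (a₁ * b₂ - a₂ * b₁) * (a₁ + b₂) + 1 * (b₁ * r) := by rw [hP₁]; field_simp
  have hQ₁' : 2 * (a₁ * b₂ - a₂ * b₁) * Q₁
      = (a₁ * b₂ - a₂ * b₁) * (a₂ + b₃) + 1 * (b₂ * r) := by rw [hQ₁]; field_simp
  have hP₂' : 2 * (a₁ * b₂ - a₂ * b₁) * P₂
      = (a₁ * b₂ - a₂ * b₁) * (a₁ + b₂) + (-1) * (b₁ * r) := by rw [hP₂]; field_simp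
  have hQ₂' : 2 * (a₁ * b₂ - a₂ * b₁) * Q₂
      = (a₁ * b₂ - a₂ * b₁) * (a₂ + b₃) + (-1) * (b₂ * r) := by rw [hQ₂]; field_simp
  have hdet : P₁ * Q₂ - P₂ * Q₁ = -r := by
    have H : (2 * (a₁ * b₂ - a₂ * b₁)) ^ 2 * (P₁ * Q₂ - P₂ * Q₁ + r) = 0 := by
      calc (2 * (a₁ * b₂ - a₂ * b₁)) ^ 2 * (P₁ * Q₂ - P₂ * Q₁ + r)
          = (2 * (a₁ * b₂ - a₂ * b₁) * P₁) * (2 * (a₁ * b₂ - a₂ * b₁) * Q₂)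
            - (2 * (a₁ * b₂ - a₂ * b₁) * P₂) * (2 * (a₁ * b₂ - a₂ * b₁) * Q₁)
            + (2 * (a₁ * b₂ - a₂ * b₁)) ^ 2 * r := by ring
        _ = 0 := by
          rw [hP₁', hQ₁', hP₂', hQ₂']
          linear_combination (-2 * r * (a₁ * b₂ - a₂ * b₁)) * hI
    have := (mul_eq_zero.mp H).resolve_left (pow_ne_zero 2 hK2)
    linarith
  have hdne : P₁ * Q₂ - P₂ * Q₁ ≠ 0 := by
    rw [hdet]; exact neg_ne_zero.mpr (ne_of_gt hrpos)
  refine ⟨coeffEquiv P₁ Q₁ P₂ Q₂ hdne, fun x y => ?_⟩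
  simp only [coeffEquiv_apply, pmul, Prod.mk_mul_mk, Prod.mk.injEq]
  constructor
  · linear_combination (x.1 * y.1) * e11 + (x.1 * y.2 + x.2 * y.1) * e21 + (x.2 * y.2) * e31
  · linear_combination (x.1 * y.1) * e12 + (x.1 * y.2 + x.2 * y.1) * e22 + (x.2 * y.2) * e32
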